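/- Let d ≥ 1 be an integer and s, κ, C > 0. Let n ≥ 3, set t_n := √((ln n)/n), and let j_*, j₁ be integers with τ ≤ j_* ≤ j₁ satisfying 2^{j_*·(2s+d)} ≤ n, n^{d/(2s+d)} ≤ 2^{j₁·d} and 2^{j₁·d} ≤ n/ln n. For each integer j with j_* ≤ j ≤ j₁ let Λ_j be a finite index set with card(Λ_j) ≤ C·2^{j·d}, let (β_{j,k})_{k∈Λ_j} be real numbers satisfying the level-wise decay Σ_{k∈Λ_j} β_{j,k}² ≤ C·2^{−2js}, and let (β̂_{j,k})_{k∈Λ_j} be square-integrable real-valued random variables satisfying, for every k ∈ Λ_j, E[(β̂_{j,k} − β_{j,k})²] ≤ C·(ln n)/n and E[(β̂_{j,k} − β_{j,k})²·1_{{|β̂_{j,k} − β_{j,k}| > κ·t_n/2}}] ≤ C·n^{−2}. Then there exists a constant C' > 0, depending only on C, κ, s and d (but not on n, j_*, j₁, the index sets, the coefficients or the estimators), such that Σ_{j=j_*}^{j₁} Σ_{k∈Λ_j} E[(β̂_{j,k}·1_{{|β̂_{j,k}| ≥ κ·t_n}} − β_{j,k})²] ≤ C'·(ln n)·n^{−2s/(2s+d)}.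 (This is the bound Q ≲ (ln n)·n^{−2s/(2s+d)} on the hard-thresholded detail-coefficient error, which is the core of part (b) of Theorem 1 of the paper, with the Besov-space level-wise coefficient decay for p ≥ 2 stated as an explicit hypothesis.) -/

import Mathlib

open MeasureTheory ProbabilityTheory

private lemma icc_succ_right (a b : ℤ) (h : a ≤ b + 1) :
    Finset.Icc a (b + 1) = insert (b + 1) (Finset.Icc a b) := by
  ext x; simp only [Finset.mem_Icc, Finset.mem_insert]; omega

private lemma icc_pred_left (a b : ℤ) (h : a - 1 ≤ b) :
    Finset.Icc (a - 1) b = insert (a - 1) (Finset.Icc a b) := by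
  ext x; simp only [Finset.mem_Icc, Finset.mem_insert]; omega

private lemma geom_up (x : ℝ) (hx : 2 ≤ x) (lo hi : ℤ) :
    ∑ j ∈ Finset.Icc lo hi, x ^ j ≤ 2 * x ^ hi := by
  have hx0 : (0 : ℝ) < x := by linarith
  rcases lt_or_ge hi lo with h | h
  · rw [Finset.Icc_eq_empty (by omega)]
    simp only [Finset.sum_empty]
    positivity
  · refine Int.le_induction (motive := fun m _ => ∑ j ∈ Finset.Icc lo m, x ^ j ≤ 2 * x ^ m) ?_ ?_ hi h
    · beta_reduce
      rw [Finset.Icc_self, Finset.sum_singleton]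
      nlinarith [zpow_pos hx0 lo]
    · beta_reduce
      intro n hn ih
      rw [icc_succ_right lo n (by omega), Finset.sum_insert (by simp [Finset.mem_Icc])]
      have h1 : x ^ (n + 1) = x * x ^ n := by
        rw [zpow_add_one₀ (ne_of_gt hx0)]; ring
      nlinarith [zpow_pos hx0 n]

private lemma geom_down (y : ℝ) (h0 : 0 < y) (h1 : y < 1) (lo hi : ℤ) :
    ∑ j ∈ Finset.Icc lo hi, y ^ j ≤ y ^ lo / (1 - y) := by
  have h1y : (0 : ℝ) < 1 - y := by linarith
  rcases lt_or_ge hi lo with h | h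
  · rw [Finset.Icc_eq_empty (by omega)]
    simp only [Finset.sum_empty]
    positivity
  · refine Int.le_induction_down
      (motive := fun m _ => ∑ j ∈ Finset.Icc m hi, y ^ j ≤ y ^ m / (1 - y)) ?_ ?_ lo h
    · beta_reduce
      rw [Finset.Icc_self, Finset.sum_singleton]
      rw [le_div_iff₀ h1y]
      nlinarith [zpow_pos h0 hi]
    · beta_reduce
      intro n hn ih
      rw [icc_pred_left n hi (by omega), Finset.sum_insert (by simp [Finset.mem_Icc])]
      have h2 : y ^ n = y ^ (n - 1) * y := by
        rw [← zpow_add_one₀ (ne_of_gt h0)]; ring_nf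
      have h3 : y ^ (n - 1) + y ^ n / (1 - y) = y ^ (n - 1) / (1 - y) := by
        rw [h2]; field_simp; ring
      linarith

open MeasureTheory

private lemma pw1 (u b t : ℝ) :
    ((if t ≤ |u| then u else 0) - b) ^ 2 ≤
      10 * ((u - b) ^ 2 * (if t / 2 < |u - b| then 1 else 0))
        + 1 * (u - b) ^ 2 + (3 * t / 2) ^ 2 := by
  have h2 : |b| ≤ |u - b| + |u| := by
    have := abs_add_le (b - u) u
    simp only [sub_add_cancel] at this
    simpa [abs_sub_comm u b] using this
  split_ifs with hu hd hd
  · nlinarith [sq_nonneg (3 * t / 2), sq_nonneg (u - b)]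
  · nlinarith [sq_nonneg (3 * t / 2)]
  · -- |u| < t, t/2 < |u - b| : b² ≤ 9 (u-b)²
    push_neg at hu
    have hb3 : |b| ≤ 3 * |u - b| := by linarith
    have h9 : b ^ 2 ≤ 9 * (u - b) ^ 2 := by
      nlinarith [mul_self_le_mul_self (abs_nonneg b) hb3, abs_mul_abs_self b,
        abs_mul_abs_self (u - b)]
    nlinarith [sq_nonneg (3 * t / 2), sq_nonneg (u - b)]
  · push_neg at hu hd
    have hb : |b| ≤ 3 * t / 2 := by linarith
    have : b ^ 2 ≤ (3 * t / 2) ^ 2 := by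
      nlinarith [mul_self_le_mul_self (abs_nonneg b) hb, abs_mul_abs_self b]
    nlinarith [sq_nonneg (u - b)]

private lemma pw2 (u b t : ℝ) :
    ((if t ≤ |u| then u else 0) - b) ^ 2 ≤
      10 * ((u - b) ^ 2 * (if t / 2 < |u - b| then 1 else 0))
        + (if t / 2 ≤ |b| then (1 : ℝ) else 0) * (u - b) ^ 2 + b ^ 2 := by
  have h3 : |u| - |b| ≤ |u - b| := abs_sub_abs_le_abs_sub u b
  split_ifs with hu hd hb hb hd hb hb
  · nlinarith [sq_nonneg b, sq_nonneg (u - b)]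
  · nlinarith [sq_nonneg b, sq_nonneg (u - b)]
  · nlinarith [sq_nonneg b]
  · exfalso; push_neg at hd hb; linarith
  · nlinarith [sq_nonneg (u - b)]
  · nlinarith [sq_nonneg (u - b)]
  · nlinarith [sq_nonneg (u - b)]
  · nlinarith [sq_nonneg (u - b)]

private lemma int_step {Ω : Type*} [MeasurableSpace Ω] (P : Measure Ω)
    [IsProbabilityMeasure P]
    (f : Ω → ℝ) (hf : Measurable f) (hf2 : Integrable (fun ω => f ω ^ 2) P)
    (b t c e : ℝ) (hc : 0 ≤ c) (he : 0 ≤ e)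
    (hpt : ∀ u : ℝ, ((if t ≤ |u| then u else 0) - b) ^ 2 ≤
      10 * ((u - b) ^ 2 * (if t / 2 < |u - b| then 1 else 0)) + c * (u - b) ^ 2 + e) :
    ∫ ω, ((if t ≤ |f ω| then f ω else 0) - b) ^ 2 ∂P ≤
      10 * (∫ ω, (f ω - b) ^ 2 * (if t / 2 < |f ω - b| then 1 else 0) ∂P)
      + c * (∫ ω, (f ω - b) ^ 2 ∂P) + e := by
  have hdom : Integrable (fun ω => 2 * f ω ^ 2 + 2 * b ^ 2) P :=
    (hf2.const_mul 2).add (integrable_const _)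
  have hfb : Integrable (fun ω => (f ω - b) ^ 2) P := by
    refine hdom.mono' (((hf.sub measurable_const).pow_const 2).aestronglyMeasurable) ?_
    filter_upwards with ω
    rw [Real.norm_eq_abs, abs_of_nonneg (sq_nonneg _)]
    nlinarith [sq_nonneg (f ω + b)]
  have hind : Integrable
      (fun ω => (f ω - b) ^ 2 * (if t / 2 < |f ω - b| then 1 else 0)) P := by
    refine hfb.mono' ?_ ?_
    · exact (((hf.sub measurable_const).pow_const 2).mul
        (Measurable.ite (measurableSet_lt measurable_const
          (hf.sub measurable_const).abs) measurable_const measurable_const)).aestronglyMeasurable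
    · filter_upwards with ω
      rw [Real.norm_eq_abs]
      split_ifs with h
      · rw [mul_one, abs_of_nonneg (sq_nonneg ((f ω) - b))]
      · simpa using sq_nonneg (f ω - b)
  have hT : Integrable (fun ω => ((if t ≤ |f ω| then f ω else 0) - b) ^ 2) P := by
    refine hdom.mono' ?_ ?_
    · exact (((Measurable.ite (measurableSet_le measurable_const hf.abs) hf
        measurable_const).sub measurable_const).pow_const 2).aestronglyMeasurable
    · filter_upwards with ω
      rw [Real.norm_eq_abs, abs_of_nonneg (sq_nonneg _)]
      split_ifs with h
      · nlinarith [sq_nonneg (f ω + b)]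
      · nlinarith [sq_nonneg (f ω), sq_nonneg b]
  calc ∫ ω, ((if t ≤ |f ω| then f ω else 0) - b) ^ 2 ∂P
      ≤ ∫ ω, (10 * ((f ω - b) ^ 2 * (if t / 2 < |f ω - b| then 1 else 0))
          + c * (f ω - b) ^ 2 + e) ∂P := by
        refine integral_mono hT ?_ fun ω => hpt (f ω)
        exact ((hind.const_mul 10).add (hfb.const_mul c)).add (integrable_const e)
    _ = 10 * (∫ ω, (f ω - b) ^ 2 * (if t / 2 < |f ω - b| then 1 else 0) ∂P)
        + c * (∫ ω, (f ω - b) ^ 2 ∂P) + e := by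
        have hg1 : Integrable (fun ω => 10 * ((f ω - b) ^ 2
            * (if t / 2 < |f ω - b| then 1 else 0))) P := hind.const_mul 10
        have hg2 : Integrable (fun ω => c * (f ω - b) ^ 2) P := hfb.const_mul c
        have hg12 : Integrable (fun ω => 10 * ((f ω - b) ^ 2
            * (if t / 2 < |f ω - b| then 1 else 0)) + c * (f ω - b) ^ 2) P := by
          exact hg1.add hg2
        rw [integral_add hg12 (integrable_const e), integral_add hg1 hg2,
          integral_const_mul, integral_const_mul, integral_const]
        simp


set_option maxHeartbeats 1600000 in
/-- the bound `Q ≲ (ln n) n^{−2s/(2s+d)}` on the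
hard-thresholded detail-coefficient error, the core of part (b) of Theorem 1 of
the paper.
There is a constant `C' > 0`, depending only on `C`, `κ`, `s` and `d`, such that
for all `n ≥ 3`, all levels `τ ≤ j_* ≤ j₁` with
`2^{j_*(2s+d)} ≤ n`, `n^{d/(2s+d)} ≤ 2^{j₁ d} ≤ n / ln n`, all index sets `Λ_j`
with `card(Λ_j) ≤ C 2^{jd}`, all coefficients with level-wise decay
`Σ_k β_{j,k}² ≤ C 2^{−2js}`, and all square-integrable estimators `β̂_{j,k}` with
`E[(β̂_{j,k} − β_{j,k})²] ≤ C (ln n)/n` and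
`E[(β̂_{j,k} − β_{j,k})² 1_{|β̂_{j,k} − β_{j,k}| > κ tₙ/2}] ≤ C n⁻²`
(where `tₙ = √((ln n)/n)`), one has
`Σ_{j=j_*}^{j₁} Σ_k E[(β̂_{j,k} 1_{|β̂_{j,k}| ≥ κ tₙ} − β_{j,k})²]
  ≤ C' (ln n) n^{−2s/(2s+d)}`. -/
theorem nonlinear_estimator_detail_rate
    (d : ℕ) (hd : 1 ≤ d) (s κ C : ℝ) (hs : 0 < s) (hκ : 0 < κ) (hC : 0 < C) :
    ∃ C' : ℝ, 0 < C' ∧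
      ∀ (Ω : Type u) (_ : MeasurableSpace Ω) (P : Measure Ω)
        (_ : IsProbabilityMeasure P)
        (n : ℕ), 3 ≤ n →
        ∀ (τ jstar j1 : ℤ), τ ≤ jstar → jstar ≤ j1 →
          (2 : ℝ) ^ ((jstar : ℝ) * (2 * s + d)) ≤ n →
          (n : ℝ) ^ ((d : ℝ) / (2 * s + d)) ≤ (2 : ℝ) ^ ((j1 : ℝ) * d) →
          (2 : ℝ) ^ ((j1 : ℝ) * d) ≤ (n : ℝ) / Real.log n →
          ∀ (Λ : ℤ → Type) (instΛ : ∀ j, Fintype (Λ j))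
            (β : ∀ j, Λ j → ℝ) (βhat : ∀ j, Λ j → Ω → ℝ),
            (∀ j, jstar ≤ j → j ≤ j1 →
              (Fintype.card (Λ j) : ℝ) ≤ C * (2 : ℝ) ^ ((j : ℝ) * d)) →
            (∀ j, jstar ≤ j → j ≤ j1 →
              ∑ k, (β j k) ^ 2 ≤ C * (2 : ℝ) ^ (-(2 * (j : ℝ) * s))) →
            (∀ j k, Measurable (βhat j k)) →
            (∀ j, jstar ≤ j → j ≤ j1 → ∀ k,
              Integrable (fun ω => (βhat j k ω) ^ 2) P) →
            (∀ j, jstar ≤ j → j ≤ j1 → ∀ k,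
              ∫ ω, (βhat j k ω - β j k) ^ 2 ∂P ≤ C * Real.log n / n) →
            (∀ j, jstar ≤ j → j ≤ j1 → ∀ k,
              ∫ ω, (βhat j k ω - β j k) ^ 2
                  * (if κ * Real.sqrt (Real.log n / n) / 2
                        < |βhat j k ω - β j k| then 1 else 0) ∂P
                ≤ C / (n : ℝ) ^ 2) →
            ∑ j ∈ Finset.Icc jstar j1, ∑ k,
                ∫ ω, ((if κ * Real.sqrt (Real.log n / n) ≤ |βhat j k ω|
                        then βhat j k ω else 0) - β j k) ^ 2 ∂P
              ≤ C' * Real.log n * (n : ℝ) ^ (-(2 * s) / (2 * s + d)) := by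
  have hd1 : (1 : ℝ) ≤ (d : ℝ) := by exact_mod_cast hd
  have hsd : (0 : ℝ) < 2 * s + (d : ℝ) := by linarith
  set q : ℝ := (2 : ℝ) ^ (-(2 * s)) with hqdef
  have hq0 : 0 < q := Real.rpow_pos_of_pos (by norm_num) _
  have hq1 : q < 1 := Real.rpow_lt_one_of_one_lt_of_neg (by norm_num) (by linarith)
  have h1q : (0 : ℝ) < 1 - q := by linarith
  have hXnn : (0 : ℝ) ≤ (4 * C / κ ^ 2 + 1) * C / (1 - q) := by
    apply div_nonneg _ h1q.le
    apply mul_nonneg _ hC.le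
    have : 0 ≤ 4 * C / κ ^ 2 := by positivity
    linarith
  refine ⟨40 * C ^ 2 + 2 * C * (C + 9 * κ ^ 2 / 4) + (4 * C / κ ^ 2 + 1) * C / (1 - q) + 1,
    ?_, ?_⟩
  · have h1 : (0 : ℝ) < 40 * C ^ 2 := by positivity
    have h2 : (0 : ℝ) < 2 * C * (C + 9 * κ ^ 2 / 4) := by positivity
    linarith
  intro Ω _inst P _instP n hn3 τ jstar j1 hτ hjj hstar hj1low hj1high Λ instΛ β βhat
    hcard hβd hmeas hint hvar htail
  have hn3R : (3 : ℝ) ≤ (n : ℝ) := by exact_mod_cast hn3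
  have hn0 : (0 : ℝ) < (n : ℝ) := by linarith
  have hn1 : (1 : ℝ) ≤ (n : ℝ) := by linarith
  have hexp : Real.exp 1 ≤ (n : ℝ) := by
    have h9 := Real.exp_one_lt_d9
    linarith
  have hln1 : 1 ≤ Real.log n := by
    calc (1 : ℝ) = Real.log (Real.exp 1) := (Real.log_exp 1).symm
      _ ≤ Real.log n := Real.log_le_log (Real.exp_pos 1) hexp
  have hlnpos : 0 < Real.log n := by linarith
  set t : ℝ := κ * Real.sqrt (Real.log n / n) with htdef
  have ht0 : 0 < t := by
    apply mul_pos hκ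
    exact Real.sqrt_pos.mpr (div_pos hlnpos hn0)
  have ht2 : t ^ 2 = κ ^ 2 * (Real.log n / n) := by
    rw [htdef, mul_pow, Real.sq_sqrt (div_nonneg hlnpos.le hn0.le)]
  -- the cut level
  set j2 : ℤ := ⌊Real.logb 2 (n : ℝ) / (2 * s + d)⌋ with hj2def
  have hlogb : (2 : ℝ) ^ Real.logb 2 (n : ℝ) = (n : ℝ) :=
    Real.rpow_logb (by norm_num) (by norm_num) hn0
  have hj2low : (2 : ℝ) ^ ((j2 : ℝ) * (2 * s + d)) ≤ (n : ℝ) := by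
    rw [← hlogb]
    apply Real.rpow_le_rpow_of_exponent_le one_le_two
    have hfl : (j2 : ℝ) ≤ Real.logb 2 (n : ℝ) / (2 * s + d) := Int.floor_le _
    calc (j2 : ℝ) * (2 * s + d) ≤ (Real.logb 2 (n : ℝ) / (2 * s + d)) * (2 * s + d) :=
          mul_le_mul_of_nonneg_right hfl hsd.le
      _ = Real.logb 2 (n : ℝ) := by field_simp
  have hj2high : (n : ℝ) < (2 : ℝ) ^ (((j2 : ℝ) + 1) * (2 * s + d)) := by
    conv_lhs => rw [← hlogb]
    apply Real.rpow_lt_rpow_of_exponent_lt one_lt_two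
    have hfl := Int.lt_floor_add_one (Real.logb 2 (n : ℝ) / (2 * s + d))
    calc Real.logb 2 (n : ℝ) = (Real.logb 2 (n : ℝ) / (2 * s + d)) * (2 * s + d) := by
          field_simp
      _ < ((j2 : ℝ) + 1) * (2 * s + d) := mul_lt_mul_of_pos_right hfl hsd
  have hjstar2 : jstar ≤ j2 := by
    have h1 : (2 : ℝ) ^ ((jstar : ℝ) * (2 * s + d)) ≤ (2 : ℝ) ^ Real.logb 2 (n : ℝ) := by
      rw [hlogb]; exact hstar
    have h2 : (jstar : ℝ) * (2 * s + d) ≤ Real.logb 2 (n : ℝ) :=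
      (Real.rpow_le_rpow_left_iff one_lt_two).mp h1
    have h3 : (jstar : ℝ) ≤ Real.logb 2 (n : ℝ) / (2 * s + d) := by
      rw [le_div_iff₀ hsd]; exact h2
    exact Int.le_floor.mpr h3
  have h2j2d : (2 : ℝ) ^ ((j2 : ℝ) * (d : ℝ)) ≤ (n : ℝ) ^ ((d : ℝ) / (2 * s + d)) := by
    have key : (2 : ℝ) ^ ((j2 : ℝ) * (d : ℝ))
        = ((2 : ℝ) ^ ((j2 : ℝ) * (2 * s + d))) ^ ((d : ℝ) / (2 * s + d)) := by
      rw [← Real.rpow_mul (by norm_num : (0:ℝ) ≤ 2)]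
      congr 1
      field_simp
    rw [key]
    exact Real.rpow_le_rpow (by positivity) hj2low (by positivity)
  have hdecay : (2 : ℝ) ^ (-(2 * s) * ((j2 : ℝ) + 1)) ≤ (n : ℝ) ^ (-(2 * s) / (2 * s + d)) := by
    have key : (2 : ℝ) ^ (-(2 * s) * ((j2 : ℝ) + 1))
        = ((2 : ℝ) ^ (((j2 : ℝ) + 1) * (2 * s + d))) ^ (-(2 * s) / (2 * s + d)) := by
      rw [← Real.rpow_mul (by norm_num : (0:ℝ) ≤ 2)]
      congr 1
      field_simp
    rw [key]
    apply Real.rpow_le_rpow_of_nonpos hn0 hj2high.le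
    apply div_nonpos_of_nonpos_of_nonneg <;> linarith
  have hj21 : j2 ≤ j1 := by
    have h1 : (2 : ℝ) ^ ((j2 : ℝ) * (d : ℝ)) ≤ (2 : ℝ) ^ ((j1 : ℝ) * (d : ℝ)) :=
      le_trans h2j2d hj1low
    have h2 : (j2 : ℝ) * (d : ℝ) ≤ (j1 : ℝ) * (d : ℝ) :=
      (Real.rpow_le_rpow_left_iff one_lt_two).mp h1
    have hd0 : (0 : ℝ) < (d : ℝ) := by linarith
    have h3 : (j2 : ℝ) ≤ (j1 : ℝ) := le_of_mul_le_mul_right h2 hd0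
    exact_mod_cast h3
  -- zpow conversions
  have hconvx : ∀ j : ℤ, (2 : ℝ) ^ ((j : ℝ) * (d : ℝ)) = ((2 : ℝ) ^ ((d : ℝ))) ^ j := by
    intro j
    rw [← Real.rpow_intCast ((2 : ℝ) ^ ((d : ℝ))) j, ← Real.rpow_mul (by norm_num : (0:ℝ) ≤ 2)]
    congr 1
    ring
  have hconvq : ∀ j : ℤ, (2 : ℝ) ^ (-(2 * (j : ℝ) * s)) = q ^ j := by
    intro j
    rw [← Real.rpow_intCast q j, hqdef, ← Real.rpow_mul (by norm_num : (0:ℝ) ≤ 2)]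
    congr 1
    ring
  have hx2 : (2 : ℝ) ≤ (2 : ℝ) ^ ((d : ℝ)) := by
    calc (2 : ℝ) = (2 : ℝ) ^ (1 : ℝ) := (Real.rpow_one 2).symm
      _ ≤ _ := Real.rpow_le_rpow_of_exponent_le one_le_two hd1
  -- geometric sums
  have hsumlow : ∑ j ∈ Finset.Icc jstar j2, (2 : ℝ) ^ ((j : ℝ) * (d : ℝ))
      ≤ 2 * (n : ℝ) ^ ((d : ℝ) / (2 * s + d)) := by
    calc ∑ j ∈ Finset.Icc jstar j2, (2 : ℝ) ^ ((j : ℝ) * (d : ℝ))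
        = ∑ j ∈ Finset.Icc jstar j2, ((2 : ℝ) ^ ((d : ℝ))) ^ j :=
          Finset.sum_congr rfl fun j _ => hconvx j
      _ ≤ 2 * ((2 : ℝ) ^ ((d : ℝ))) ^ j2 := geom_up _ hx2 _ _
      _ = 2 * (2 : ℝ) ^ ((j2 : ℝ) * (d : ℝ)) := by rw [hconvx j2]
      _ ≤ 2 * (n : ℝ) ^ ((d : ℝ) / (2 * s + d)) := by linarith
  have hsumhigh : ∑ j ∈ Finset.Icc (j2 + 1) j1, (2 : ℝ) ^ ((j : ℝ) * (d : ℝ))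
      ≤ 2 * ((n : ℝ) / Real.log n) := by
    calc ∑ j ∈ Finset.Icc (j2 + 1) j1, (2 : ℝ) ^ ((j : ℝ) * (d : ℝ))
        = ∑ j ∈ Finset.Icc (j2 + 1) j1, ((2 : ℝ) ^ ((d : ℝ))) ^ j :=
          Finset.sum_congr rfl fun j _ => hconvx j
      _ ≤ 2 * ((2 : ℝ) ^ ((d : ℝ))) ^ j1 := geom_up _ hx2 _ _
      _ = 2 * (2 : ℝ) ^ ((j1 : ℝ) * (d : ℝ)) := by rw [hconvx j1]
      _ ≤ 2 * ((n : ℝ) / Real.log n) := by linarith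
  have hsumq : ∑ j ∈ Finset.Icc (j2 + 1) j1, (2 : ℝ) ^ (-(2 * (j : ℝ) * s))
      ≤ (n : ℝ) ^ (-(2 * s) / (2 * s + d)) / (1 - q) := by
    have hq2 : q ^ (j2 + 1) ≤ (n : ℝ) ^ (-(2 * s) / (2 * s + d)) := by
      have := hconvq (j2 + 1)
      push_cast at this
      rw [← this]
      calc (2 : ℝ) ^ (-(2 * ((j2 : ℝ) + 1) * s)) = (2 : ℝ) ^ (-(2 * s) * ((j2 : ℝ) + 1)) := by
            ring_nf
        _ ≤ _ := hdecay
    calc ∑ j ∈ Finset.Icc (j2 + 1) j1, (2 : ℝ) ^ (-(2 * (j : ℝ) * s))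
        = ∑ j ∈ Finset.Icc (j2 + 1) j1, q ^ j :=
          Finset.sum_congr rfl fun j _ => hconvq j
      _ ≤ q ^ (j2 + 1) / (1 - q) := geom_down q hq0 hq1 _ _
      _ ≤ (n : ℝ) ^ (-(2 * s) / (2 * s + d)) / (1 - q) := by
          rw [div_eq_mul_inv, div_eq_mul_inv]
          exact mul_le_mul_of_nonneg_right hq2 (by positivity)
  -- abbreviations for constants
  have hKlow0 : (0 : ℝ) ≤ 10 * (C / (n : ℝ) ^ 2) + C * Real.log n / (n : ℝ)
      + 9 / 4 * (κ ^ 2 * (Real.log n / (n : ℝ))) := by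
    have h1 : (0 : ℝ) ≤ 10 * (C / (n : ℝ) ^ 2) :=
      mul_nonneg (by norm_num) (div_nonneg hC.le (by positivity))
    have h2 : (0 : ℝ) ≤ C * Real.log n / (n : ℝ) :=
      div_nonneg (mul_nonneg hC.le hlnpos.le) hn0.le
    have h3 : (0 : ℝ) ≤ 9 / 4 * (κ ^ 2 * (Real.log n / (n : ℝ))) :=
      mul_nonneg (by norm_num) (mul_nonneg (sq_nonneg κ) (div_nonneg hlnpos.le hn0.le))
    linarith
  have hc10 : (0 : ℝ) ≤ C * (10 * (C / (n : ℝ) ^ 2)) :=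
    mul_nonneg hC.le (mul_nonneg (by norm_num) (div_nonneg hC.le (by positivity)))
  have hcoefq : (0 : ℝ) ≤ (4 * C / κ ^ 2 + 1) * C := by
    apply mul_nonneg _ hC.le
    have : (0 : ℝ) ≤ 4 * C / κ ^ 2 := by positivity
    linarith
  -- low-level bound
  have hlow : ∀ j, jstar ≤ j → j ≤ j2 →
      (∑ k, ∫ ω, ((if t ≤ |βhat j k ω| then βhat j k ω else 0) - β j k) ^ 2 ∂P)
        ≤ (2 : ℝ) ^ ((j : ℝ) * (d : ℝ)) * (C * (10 * (C / (n : ℝ) ^ 2)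
            + C * Real.log n / (n : ℝ) + 9 / 4 * (κ ^ 2 * (Real.log n / (n : ℝ))))) := by
    intro j hja hjb
    have hjle : j ≤ j1 := le_trans hjb hj21
    have hperk : ∀ k, ∫ ω, ((if t ≤ |βhat j k ω| then βhat j k ω else 0) - β j k) ^ 2 ∂P
        ≤ 10 * (C / (n : ℝ) ^ 2) + C * Real.log n / (n : ℝ)
          + 9 / 4 * (κ ^ 2 * (Real.log n / (n : ℝ))) := by
      intro k
      have h := int_step P (βhat j k) (hmeas j k) (hint j hja hjle k) (β j k) t 1
        ((3 * t / 2) ^ 2) zero_le_one (by positivity) (fun u => pw1 u (β j k) t)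
      have h1 := htail j hja hjle k
      have h2 := hvar j hja hjle k
      have h3 : (3 * t / 2) ^ 2 = 9 / 4 * (κ ^ 2 * (Real.log n / (n : ℝ))) := by
        calc (3 * t / 2) ^ 2 = 9 / 4 * t ^ 2 := by ring
          _ = _ := by rw [ht2]
      rw [h3, one_mul] at h
      linarith
    calc (∑ k, ∫ ω, ((if t ≤ |βhat j k ω| then βhat j k ω else 0) - β j k) ^ 2 ∂P)
        ≤ ∑ _k : Λ j, (10 * (C / (n : ℝ) ^ 2) + C * Real.log n / (n : ℝ)
            + 9 / 4 * (κ ^ 2 * (Real.log n / (n : ℝ)))) :=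
          Finset.sum_le_sum fun k _ => hperk k
      _ = (Fintype.card (Λ j) : ℝ) * (10 * (C / (n : ℝ) ^ 2) + C * Real.log n / (n : ℝ)
            + 9 / 4 * (κ ^ 2 * (Real.log n / (n : ℝ)))) := by
          rw [Finset.sum_const, Finset.card_univ, nsmul_eq_mul]
      _ ≤ (C * (2 : ℝ) ^ ((j : ℝ) * (d : ℝ))) * (10 * (C / (n : ℝ) ^ 2)
            + C * Real.log n / (n : ℝ) + 9 / 4 * (κ ^ 2 * (Real.log n / (n : ℝ)))) :=
          mul_le_mul_of_nonneg_right (hcard j hja hjle) hKlow0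
      _ = _ := by ring
  -- high-level bound
  have hhigh : ∀ j, j2 + 1 ≤ j → j ≤ j1 →
      (∑ k, ∫ ω, ((if t ≤ |βhat j k ω| then βhat j k ω else 0) - β j k) ^ 2 ∂P)
        ≤ (2 : ℝ) ^ ((j : ℝ) * (d : ℝ)) * (C * (10 * (C / (n : ℝ) ^ 2)))
          + ((4 * C / κ ^ 2 + 1) * C) * (2 : ℝ) ^ (-(2 * (j : ℝ) * s)) := by
    intro j hja hjb
    have hjge : jstar ≤ j := le_trans hjstar2 (by omega)
    have hperk : ∀ k, ∫ ω, ((if t ≤ |βhat j k ω| then βhat j k ω else 0) - β j k) ^ 2 ∂P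
        ≤ 10 * (C / (n : ℝ) ^ 2) + (4 * C / κ ^ 2 + 1) * (β j k) ^ 2 := by
      intro k
      have h := int_step P (βhat j k) (hmeas j k) (hint j hjge hjb k) (β j k) t
        (if t / 2 ≤ |β j k| then (1 : ℝ) else 0) ((β j k) ^ 2)
        (by split_ifs <;> norm_num) (sq_nonneg _) (fun u => pw2 u (β j k) t)
      have h1 := htail j hjge hjb k
      have h2 := hvar j hjge hjb k
      have hG2nn : 0 ≤ ∫ ω, (βhat j k ω - β j k) ^ 2 ∂P :=
        integral_nonneg fun ω => sq_nonneg _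
      have hcG2 : (if t / 2 ≤ |β j k| then (1 : ℝ) else 0)
            * (∫ ω, (βhat j k ω - β j k) ^ 2 ∂P) ≤ (4 * C / κ ^ 2) * (β j k) ^ 2 := by
        split_ifs with hb
        · have hsq : (t / 2) ^ 2 ≤ (β j k) ^ 2 := by
            nlinarith [mul_self_le_mul_self (by linarith : (0 : ℝ) ≤ t / 2) hb,
              abs_mul_abs_self (β j k)]
          have hlogn : κ ^ 2 * (Real.log n / n) ≤ 4 * (β j k) ^ 2 := by
            rw [← ht2]; nlinarith
          have hκ2 : (0 : ℝ) < κ ^ 2 := by positivity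
          have hdiv : Real.log n / (n : ℝ) ≤ 4 * (β j k) ^ 2 / κ ^ 2 := by
            rw [le_div_iff₀ hκ2]; nlinarith
          rw [one_mul]
          calc ∫ ω, (βhat j k ω - β j k) ^ 2 ∂P ≤ C * Real.log n / (n : ℝ) := h2
            _ = C * (Real.log n / (n : ℝ)) := by ring
            _ ≤ C * (4 * (β j k) ^ 2 / κ ^ 2) := mul_le_mul_of_nonneg_left hdiv hC.le
            _ = (4 * C / κ ^ 2) * (β j k) ^ 2 := by ring
        · rw [zero_mul]
          exact mul_nonneg (div_nonneg (by linarith) (sq_nonneg κ)) (sq_nonneg _)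
      calc ∫ ω, ((if t ≤ |βhat j k ω| then βhat j k ω else 0) - β j k) ^ 2 ∂P
          ≤ 10 * (∫ ω, (βhat j k ω - β j k) ^ 2
              * (if t / 2 < |βhat j k ω - β j k| then 1 else 0) ∂P)
            + (if t / 2 ≤ |β j k| then (1 : ℝ) else 0)
              * (∫ ω, (βhat j k ω - β j k) ^ 2 ∂P) + (β j k) ^ 2 := h
        _ ≤ 10 * (C / (n : ℝ) ^ 2) + (4 * C / κ ^ 2) * (β j k) ^ 2 + (β j k) ^ 2 := by
            linarith
        _ = 10 * (C / (n : ℝ) ^ 2) + (4 * C / κ ^ 2 + 1) * (β j k) ^ 2 := by ring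
    calc (∑ k, ∫ ω, ((if t ≤ |βhat j k ω| then βhat j k ω else 0) - β j k) ^ 2 ∂P)
        ≤ ∑ k, (10 * (C / (n : ℝ) ^ 2) + (4 * C / κ ^ 2 + 1) * (β j k) ^ 2) :=
          Finset.sum_le_sum fun k _ => hperk k
      _ = (Fintype.card (Λ j) : ℝ) * (10 * (C / (n : ℝ) ^ 2))
          + (4 * C / κ ^ 2 + 1) * ∑ k, (β j k) ^ 2 := by
          rw [Finset.sum_add_distrib, Finset.sum_const, Finset.card_univ, nsmul_eq_mul,
            ← Finset.mul_sum]
      _ ≤ (C * (2 : ℝ) ^ ((j : ℝ) * (d : ℝ))) * (10 * (C / (n : ℝ) ^ 2))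
          + (4 * C / κ ^ 2 + 1) * (C * (2 : ℝ) ^ (-(2 * (j : ℝ) * s))) := by
          apply add_le_add
          · exact mul_le_mul_of_nonneg_right (hcard j hjge hjb)
              (mul_nonneg (by norm_num) (div_nonneg hC.le (by positivity)))
          · apply mul_le_mul_of_nonneg_left (hβd j hjge hjb)
            have : (0 : ℝ) ≤ 4 * C / κ ^ 2 := by positivity
            linarith
      _ = _ := by ring
  -- split the sum
  have hsplit : Finset.Icc jstar j1 = Finset.Icc jstar j2 ∪ Finset.Icc (j2 + 1) j1 := by
    ext x
    simp only [Finset.mem_Icc, Finset.mem_union]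
    omega
  have hdisj : Disjoint (Finset.Icc jstar j2) (Finset.Icc (j2 + 1) j1) := by
    rw [Finset.disjoint_left]
    intro a ha hb
    simp only [Finset.mem_Icc] at ha hb
    omega
  rw [hsplit, Finset.sum_union hdisj]
  -- bound the two blocks
  have hblockA : ∑ j ∈ Finset.Icc jstar j2,
      (∑ k, ∫ ω, ((if t ≤ |βhat j k ω| then βhat j k ω else 0) - β j k) ^ 2 ∂P)
      ≤ (2 * (n : ℝ) ^ ((d : ℝ) / (2 * s + d))) * (C * (10 * (C / (n : ℝ) ^ 2)
          + C * Real.log n / (n : ℝ) + 9 / 4 * (κ ^ 2 * (Real.log n / (n : ℝ))))) := by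
    calc ∑ j ∈ Finset.Icc jstar j2,
        (∑ k, ∫ ω, ((if t ≤ |βhat j k ω| then βhat j k ω else 0) - β j k) ^ 2 ∂P)
        ≤ ∑ j ∈ Finset.Icc jstar j2, (2 : ℝ) ^ ((j : ℝ) * (d : ℝ)) * (C * (10 * (C / (n : ℝ) ^ 2)
            + C * Real.log n / (n : ℝ) + 9 / 4 * (κ ^ 2 * (Real.log n / (n : ℝ))))) := by
          refine Finset.sum_le_sum fun j hj => ?_
          rw [Finset.mem_Icc] at hj
          exact hlow j hj.1 hj.2
      _ = (∑ j ∈ Finset.Icc jstar j2, (2 : ℝ) ^ ((j : ℝ) * (d : ℝ))) * (C * (10 * (C / (n : ℝ) ^ 2)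
            + C * Real.log n / (n : ℝ) + 9 / 4 * (κ ^ 2 * (Real.log n / (n : ℝ))))) := by
          rw [Finset.sum_mul]
      _ ≤ _ := mul_le_mul_of_nonneg_right hsumlow (mul_nonneg hC.le hKlow0)
  have hblockB : ∑ j ∈ Finset.Icc (j2 + 1) j1,
      (∑ k, ∫ ω, ((if t ≤ |βhat j k ω| then βhat j k ω else 0) - β j k) ^ 2 ∂P)
      ≤ (2 * ((n : ℝ) / Real.log n)) * (C * (10 * (C / (n : ℝ) ^ 2)))
        + ((4 * C / κ ^ 2 + 1) * C) * ((n : ℝ) ^ (-(2 * s) / (2 * s + d)) / (1 - q)) := by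
    calc ∑ j ∈ Finset.Icc (j2 + 1) j1,
        (∑ k, ∫ ω, ((if t ≤ |βhat j k ω| then βhat j k ω else 0) - β j k) ^ 2 ∂P)
        ≤ ∑ j ∈ Finset.Icc (j2 + 1) j1,
            ((2 : ℝ) ^ ((j : ℝ) * (d : ℝ)) * (C * (10 * (C / (n : ℝ) ^ 2)))
              + ((4 * C / κ ^ 2 + 1) * C) * (2 : ℝ) ^ (-(2 * (j : ℝ) * s))) := by
          refine Finset.sum_le_sum fun j hj => ?_
          rw [Finset.mem_Icc] at hj
          exact hhigh j hj.1 hj.2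
      _ = (∑ j ∈ Finset.Icc (j2 + 1) j1, (2 : ℝ) ^ ((j : ℝ) * (d : ℝ)))
            * (C * (10 * (C / (n : ℝ) ^ 2)))
          + ((4 * C / κ ^ 2 + 1) * C)
            * (∑ j ∈ Finset.Icc (j2 + 1) j1, (2 : ℝ) ^ (-(2 * (j : ℝ) * s))) := by
          rw [Finset.sum_add_distrib, Finset.sum_mul, ← Finset.mul_sum]
      _ ≤ _ := by
          apply add_le_add
          · exact mul_le_mul_of_nonneg_right hsumhigh hc10
          · exact mul_le_mul_of_nonneg_left hsumq hcoefq
  -- final arithmetic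
  set L : ℝ := Real.log n with hLdef
  set E : ℝ := (n : ℝ) ^ (-(2 * s) / (2 * s + d)) with hEdef
  set D : ℝ := (n : ℝ) ^ ((d : ℝ) / (2 * s + d)) with hDdef
  have hE0 : 0 < E := Real.rpow_pos_of_pos hn0 _
  have hfact1 : D * (L / (n : ℝ)) = L * E := by
    have hexp : -(2 * s) / (2 * s + (d : ℝ)) = (d : ℝ) / (2 * s + d) - 1 := by
      field_simp
      ring
    have hpow : D / (n : ℝ) = E := by
      rw [hEdef, hexp, Real.rpow_sub hn0, Real.rpow_one, hDdef]
    calc D * (L / (n : ℝ)) = L * (D / (n : ℝ)) := by ring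
      _ = L * E := by rw [hpow]
  have hfact2 : D * (1 / (n : ℝ) ^ 2) ≤ L * E := by
    have hexp : -(2 * s) / (2 * s + (d : ℝ)) = (d : ℝ) / (2 * s + d) - 1 := by
      field_simp
      ring
    have hpow : D / (n : ℝ) = E := by
      rw [hEdef, hexp, Real.rpow_sub hn0, Real.rpow_one, hDdef]
    have h1 : D * (1 / (n : ℝ) ^ 2) = (D / (n : ℝ)) / (n : ℝ) := by ring
    rw [h1, hpow]
    calc E / (n : ℝ) ≤ E := div_le_self hE0.le hn1
      _ ≤ L * E := le_mul_of_one_le_left hE0.le hln1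
  have hfact3 : ((n : ℝ) / L) * (1 / (n : ℝ) ^ 2) ≤ L * E := by
    have h1 : ((n : ℝ) / L) * (1 / (n : ℝ) ^ 2) = 1 / ((n : ℝ) * L) := by
      field_simp
    have h2 : (1 : ℝ) / ((n : ℝ) * L) ≤ 1 / (n : ℝ) := by
      apply one_div_le_one_div_of_le hn0
      nlinarith
    have h3 : (1 : ℝ) / (n : ℝ) ≤ E := by
      rw [hEdef, one_div, ← Real.rpow_neg_one (n : ℝ)]
      apply Real.rpow_le_rpow_of_exponent_le hn1
      rw [neg_div]
      have h4 : 2 * s / (2 * s + (d : ℝ)) ≤ 1 := by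
        rw [div_le_one hsd]
        linarith
      linarith
    calc ((n : ℝ) / L) * (1 / (n : ℝ) ^ 2) = 1 / ((n : ℝ) * L) := h1
      _ ≤ 1 / (n : ℝ) := h2
      _ ≤ E := h3
      _ ≤ L * E := le_mul_of_one_le_left hE0.le hln1
  have hT1 : (2 * D) * (C * (10 * (C / (n : ℝ) ^ 2) + C * L / (n : ℝ)
        + 9 / 4 * (κ ^ 2 * (L / (n : ℝ)))))
      ≤ (20 * C ^ 2 + 2 * C * (C + 9 * κ ^ 2 / 4)) * (L * E) := by
    calc (2 * D) * (C * (10 * (C / (n : ℝ) ^ 2) + C * L / (n : ℝ)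
          + 9 / 4 * (κ ^ 2 * (L / (n : ℝ)))))
        = 20 * C ^ 2 * (D * (1 / (n : ℝ) ^ 2))
          + (2 * C ^ 2 + 9 / 2 * C * κ ^ 2) * (D * (L / (n : ℝ))) := by ring
      _ ≤ 20 * C ^ 2 * (L * E) + (2 * C ^ 2 + 9 / 2 * C * κ ^ 2) * (L * E) := by
          apply add_le_add
          · exact mul_le_mul_of_nonneg_left hfact2 (by positivity)
          · rw [hfact1]
      _ = (20 * C ^ 2 + 2 * C * (C + 9 * κ ^ 2 / 4)) * (L * E) := by ring
  have hT2 : (2 * ((n : ℝ) / L)) * (C * (10 * (C / (n : ℝ) ^ 2))) ≤ 20 * C ^ 2 * (L * E) := by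
    calc (2 * ((n : ℝ) / L)) * (C * (10 * (C / (n : ℝ) ^ 2)))
        = 20 * C ^ 2 * (((n : ℝ) / L) * (1 / (n : ℝ) ^ 2)) := by ring
      _ ≤ 20 * C ^ 2 * (L * E) := mul_le_mul_of_nonneg_left hfact3 (by positivity)
  have hT3 : ((4 * C / κ ^ 2 + 1) * C) * (E / (1 - q))
      ≤ ((4 * C / κ ^ 2 + 1) * C / (1 - q)) * (L * E) := by
    calc ((4 * C / κ ^ 2 + 1) * C) * (E / (1 - q))
        = ((4 * C / κ ^ 2 + 1) * C / (1 - q)) * E := by ring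
      _ ≤ ((4 * C / κ ^ 2 + 1) * C / (1 - q)) * (L * E) :=
          mul_le_mul_of_nonneg_left (le_mul_of_one_le_left hE0.le hln1) hXnn
  have hLE0 : 0 < L * E := mul_pos hlnpos hE0
  calc (∑ j ∈ Finset.Icc jstar j2,
        ∑ k, ∫ ω, ((if t ≤ |βhat j k ω| then βhat j k ω else 0) - β j k) ^ 2 ∂P)
      + ∑ j ∈ Finset.Icc (j2 + 1) j1,
        ∑ k, ∫ ω, ((if t ≤ |βhat j k ω| then βhat j k ω else 0) - β j k) ^ 2 ∂P
      ≤ (2 * D) * (C * (10 * (C / (n : ℝ) ^ 2) + C * L / (n : ℝ)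
          + 9 / 4 * (κ ^ 2 * (L / (n : ℝ)))))
        + ((2 * ((n : ℝ) / L)) * (C * (10 * (C / (n : ℝ) ^ 2)))
          + ((4 * C / κ ^ 2 + 1) * C) * (E / (1 - q))) := by
        apply add_le_add
        · calc _ ≤ _ := hblockA
            _ = (2 * D) * (C * (10 * (C / (n : ℝ) ^ 2) + C * L / (n : ℝ)
                + 9 / 4 * (κ ^ 2 * (L / (n : ℝ))))) := by ring
        · exact hblockB
    _ ≤ (20 * C ^ 2 + 2 * C * (C + 9 * κ ^ 2 / 4)) * (L * E) + (20 * C ^ 2 * (L * E)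
        + ((4 * C / κ ^ 2 + 1) * C / (1 - q)) * (L * E)) := by
        exact add_le_add hT1 (add_le_add hT2 hT3)
    _ ≤ (40 * C ^ 2 + 2 * C * (C + 9 * κ ^ 2 / 4) + (4 * C / κ ^ 2 + 1) * C / (1 - q) + 1)
        * L * E := by nlinarith
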